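/- A variety X ⊂ ℙ^N is strongly concise if and only if its vanishing radical ideal I(X) does not contain any polynomial of the form x_i·F + x^α, where x^α is a monomial in the variables {x_0,…,x_N} \ {x_i} (not involving x_i) and F is any polynomial. -/

import Mathlib

open MvPolynomial

/-- A polynomial vanishes identically on a set of points of affine space. -/
def vanishesOn {n : ℕ} (f : MvPolynomial (Fin n) ℂ) (S : Set (Fin n → ℂ)) : Prop :=
  ∀ v ∈ S, MvPolynomial.eval v f = 0

/-- Zariski closure of a set of points: the zero locus of its vanishing ideal. -/
def zclosure {n : ℕ} (S : Set (Fin n → ℂ)) : Set (Fin n → ℂ) :=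
  {v | ∀ f : MvPolynomial (Fin n) ℂ, vanishesOn f S → MvPolynomial.eval v f = 0}

/-- Zariski-irreducibility: nonempty and the vanishing ideal is prime. -/
def ZIrred {n : ℕ} (S : Set (Fin n → ℂ)) : Prop :=
  S.Nonempty ∧ ∀ f g : MvPolynomial (Fin n) ℂ,
    vanishesOn (f * g) S → vanishesOn f S ∨ vanishesOn g S

/-- Krull dimension of (the Zariski closure of) a set, as the order-theoretic
Krull dimension of chains of irreducible Zariski-closed subsets of it. -/
noncomputable def zdim {n : ℕ} (S : Set (Fin n → ℂ)) : WithBot ℕ∞ :=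
  Order.krullDim {T : Set (Fin n → ℂ) // zclosure T = T ∧ ZIrred T ∧ T ⊆ zclosure S}

/-- Projective equality of coordinate vectors: equality up to a nonzero scalar. -/
def ProjEq {n : ℕ} (v w : Fin n → ℂ) : Prop :=
  ∃ c : ℂ, c ≠ 0 ∧ w = c • v

/-- The set of (representatives of) Hadamard products of `m` points of `X`. -/
def hprodSet {n : ℕ} (X : Set (Fin n → ℂ)) (m : ℕ) : Set (Fin n → ℂ) :=
  {p | ∃ f : Fin m → (Fin n → ℂ), (∀ i, f i ∈ X) ∧ ProjEq (∏ i, f i) p}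

/-- The `m`-th Hadamard power of `X`: the Zariski closure of the set of Hadamard
products of `m` points of `X`. -/
def hpow {n : ℕ} (X : Set (Fin n → ℂ)) (m : ℕ) : Set (Fin n → ℂ) :=
  zclosure (hprodSet X m)

/-- `p` is an (actual) Hadamard product of `m` points of `X`. -/
def HadDecomp {n : ℕ} (X : Set (Fin n → ℂ)) (m : ℕ) (p : Fin n → ℂ) : Prop :=
  p ∈ hprodSet X m

/-- The Hadamard-`X`-rank of `p` is at most `r` (and finite, in particular). -/
def HrkLe {n : ℕ} (X : Set (Fin n → ℂ)) (r : ℕ) (p : Fin n → ℂ) : Prop :=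
  ∃ m, 1 ≤ m ∧ m ≤ r ∧ HadDecomp X m p

/-- The Hadamard-`X`-rank of `p` is exactly `r`. -/
def HrkEq {n : ℕ} (X : Set (Fin n → ℂ)) (r : ℕ) (p : Fin n → ℂ) : Prop :=
  HadDecomp X r p ∧ ∀ m, 1 ≤ m → m < r → ¬ HadDecomp X m p

/-- The Hadamard-`X`-rank of `p` is finite. -/
def HrkFin {n : ℕ} (X : Set (Fin n → ℂ)) (p : Fin n → ℂ) : Prop :=
  ∃ m, 1 ≤ m ∧ HadDecomp X m p

/-- `X ⊂ ℙ^{n-1}` is strongly concise: for each coordinate `i` there is a point of `X`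
whose `i`-th coordinate vanishes and all other coordinates are nonzero. -/
def StronglyConcise {n : ℕ} (X : Set (Fin n → ℂ)) : Prop :=
  ∀ i : Fin n, ∃ v ∈ X, v i = 0 ∧ ∀ j ≠ i, v j ≠ 0

/-- a Zariski-closed set `X` is strongly concise iff its vanishing ideal
contains no polynomial of the form `x_i·F + x^α` with `x^α` a monomial not involving
`x_i`. -/
theorem stmt7 (N : ℕ) (X : Set (Fin (N + 1) → ℂ)) (hX : zclosure X = X) :
    StronglyConcise X ↔
      ¬ ∃ (i : Fin (N + 1)) (F : MvPolynomial (Fin (N + 1)) ℂ) (α : Fin (N + 1) →₀ ℕ),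
          α i = 0 ∧ vanishesOn (MvPolynomial.X i * F + MvPolynomial.monomial α 1) X := by
  constructor
  · rintro hSC ⟨i, F, α, hαi, hvan⟩
    obtain ⟨v, hvX, hvi, hvj⟩ := hSC i
    have h0 := hvan v hvX
    rw [map_add, map_mul, eval_X, hvi, zero_mul, zero_add, eval_monomial, one_mul] at h0
    have hne : (α.prod fun n e => v n ^ e) ≠ 0 := by
      refine Finset.prod_ne_zero_iff.2 fun j hj => pow_ne_zero _ (hvj j ?_)
      rintro rfl
      exact (Finsupp.mem_support_iff.1 hj) hαi
    exact hne h0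
  · intro h i
    by_contra hc
    push_neg at hc
    apply h
    set β : Fin (N + 1) →₀ ℕ := Finsupp.equivFunOnFinite.symm
      (fun j => if j = i then 0 else 1) with hβ
    have hβi : β i = 0 := by simp [hβ]
    have hβj : ∀ j ≠ i, β j = 1 := by
      intro j hj
      simp [hβ, hj]
    set J : Ideal (MvPolynomial (Fin (N + 1)) ℂ) :=
      MvPolynomial.vanishingIdeal ℂ X ⊔ Ideal.span {MvPolynomial.X i} with hJ
    have hg : (MvPolynomial.monomial β (1 : ℂ)) ∈ J.radical := by
      rw [← MvPolynomial.vanishingIdeal_zeroLocus_eq_radical (K := ℂ)]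
      intro v hv
      have hvX : v ∈ X := by
        rw [← hX]
        intro f hf
        exact hv f (Ideal.mem_sup_left hf)
      have hvi : v i = 0 := by
        have := hv (MvPolynomial.X i) (Ideal.mem_sup_right (Ideal.subset_span rfl))
        simpa using this
      obtain ⟨j, hj, hvj0⟩ := hc v hvX hvi
      rw [aeval_monomial, map_one, one_mul]
      refine Finset.prod_eq_zero (i := j) (Finsupp.mem_support_iff.2 (by simp [hβj j hj])) ?_
      simp [hvj0, hβj j hj]
    obtain ⟨k, hk⟩ := hg
    rw [Submodule.mem_sup] at hk
    obtain ⟨y, hy, z, hz, hyz⟩ := hk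
    rw [Ideal.mem_span_singleton] at hz
    obtain ⟨F, rfl⟩ := hz
    refine ⟨i, -F, k • β, by simp [hβi], fun v hvX => ?_⟩
    have hmon : (MvPolynomial.monomial (k • β) (1 : ℂ))
        = (MvPolynomial.monomial β (1 : ℂ)) ^ k := by
      rw [MvPolynomial.monomial_pow, one_pow]
    have heq : MvPolynomial.X i * (-F) + (MvPolynomial.monomial β (1 : ℂ)) ^ k = y := by
      rw [← hyz]; ring
    rw [hmon, heq]
    exact hy v hvX
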